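/- In the deterministic saddle point setup below, with constant step-size ε = 1/√T, let x̄_T = (1/T) Σ_{t=1}^T x_t be the running average of the primal iterates. Then F(x̄_T) − F(x*) ≤ (1/(2√T)) (‖x_1 − x*‖² + K), i.e. the averaged iterate is O(1/√T)-suboptimal in objective value. -/

import Mathlib

open Finset
open scoped InnerProductSpace

-- gradient inequality for convex differentiable functions
lemma grad_ineq {E : Type*} [NormedAddCommGroup E] [InnerProductSpace ℝ E] [CompleteSpace E]
    {f : E → ℝ} (hconv : ConvexOn ℝ Set.univ f) (hdiff : Differentiable ℝ f) (x y : E) :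
    f x + ⟪gradient f x, y - x⟫_ℝ ≤ f y := by
  have hinner : ⟪gradient f x, y - x⟫_ℝ = fderiv ℝ f x (y - x) := by
    simpa [gradient] using
      (InnerProductSpace.toDual_symm_apply (𝕜 := ℝ) (E := E)
        (x := y - x) (y := fderiv ℝ f x))
  set φ : ℝ → ℝ := fun s => f (x + s • (y - x)) with hφ
  have hline : HasDerivAt (fun s : ℝ => x + s • (y - x)) (y - x) 0 := by
    simpa using ((hasDerivAt_id (0:ℝ)).smul_const (y - x)).const_add x
  have hfd : HasFDerivAt f (fderiv ℝ f x) (x + (0:ℝ) • (y - x)) := by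
    simpa using (hdiff x).hasFDerivAt
  have hφd : HasDerivAt φ (fderiv ℝ f x (y - x)) 0 := hfd.comp_hasDerivAt 0 hline
  have hφconv : ConvexOn ℝ Set.univ φ := by
    refine ⟨convex_univ, ?_⟩
    intro p _ q _ a b ha hb hab
    have hb' : b = 1 - a := by linarith
    subst hb'
    have key : x + (a * p + (1 - a) * q) • (y - x)
        = a • (x + p • (y - x)) + (1 - a) • (x + q • (y - x)) := by
      module
    have h2 := hconv.2 (Set.mem_univ (x + p • (y - x)))
      (Set.mem_univ (x + q • (y - x))) ha hb hab
    simp only [φ, smul_eq_mul]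
    rw [key]
    exact h2
  have hslope := hφconv.le_slope_of_hasDerivAt (Set.mem_univ (0:ℝ)) (Set.mem_univ (1:ℝ))
    one_pos hφd
  have h01 : slope φ 0 1 = f y - f x := by
    simp [slope, φ]
  rw [hinner]
  have := hslope
  rw [h01] at this
  linarith

-- projection contraction
lemma proj_contract {E : Type*} [NormedAddCommGroup E] [InnerProductSpace ℝ E]
    {X : Set E} (hX : Convex ℝ X) (u p : E) (hp : p ∈ X)
    (hmin : ∀ w ∈ X, ‖u - p‖ ≤ ‖u - w‖) (w : E) (hw : w ∈ X) :
    ‖p - w‖ ≤ ‖u - w‖ := by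
  have hne : Nonempty X := ⟨⟨p, hp⟩⟩
  have heq : ‖u - p‖ = ⨅ w : X, ‖u - w‖ := by
    apply le_antisymm
    · exact le_ciInf fun z => hmin z z.2
    · exact ciInf_le ⟨0, fun _ ⟨z, hz⟩ => hz ▸ norm_nonneg _⟩ (⟨p, hp⟩ : X)
  have hinner : ⟪u - p, w - p⟫_ℝ ≤ 0 :=
    ((norm_eq_iInf_iff_real_inner_le_zero hX hp).mp heq) w hw
  have hexp : ‖u - w‖ ^ 2 = ‖u - p‖ ^ 2 - 2 * ⟪u - p, w - p⟫_ℝ + ‖w - p‖ ^ 2 := by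
    have := norm_sub_sq_real (u - p) (w - p)
    simpa [sub_sub_sub_cancel_right] using this
  have h1 : ‖p - w‖ = ‖w - p‖ := norm_sub_rev _ _
  have h2 : ‖p - w‖ ^ 2 ≤ ‖u - w‖ ^ 2 := by
    rw [h1]; nlinarith [sq_nonneg ‖u - p‖]
  nlinarith [h2, norm_nonneg (p - w), norm_nonneg (u - w)]

lemma eunorm_sq {m : ℕ} (v : EuclideanSpace ℝ (Fin m)) : ‖v‖ ^ 2 = ∑ i, (v i) ^ 2 := by
  rw [EuclideanSpace.norm_eq, Real.sq_sqrt (by positivity)]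
  simp [Real.norm_eq_abs, sq_abs]

lemma telescope_Icc (A : ℕ → ℝ) (T : ℕ) :
    ∑ t ∈ Finset.Icc 1 T, (A t - A (t + 1)) = A 1 - A (T + 1) := by
  induction T with
  | zero => simp
  | succ T ih =>
    rw [Finset.sum_Icc_succ_top (by omega), ih]
    ring

lemma max_sq_le (a : ℝ) : (max a 0) ^ 2 ≤ a ^ 2 := by
  rcases le_or_gt a 0 with h | h
  · simp [max_eq_right h]; positivity
  · simp [max_eq_left h.le]

lemma eu_inner_eq {m : ℕ} (u v : EuclideanSpace ℝ (Fin m)) :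
    ⟪u, v⟫_ℝ = ∑ i, u i * v i := by
  simp [PiLp.inner_apply, RCLike.inner_apply, mul_comm]


/-- First part of Corollary 1 of the paper: with constant step-size `ε = 1/√T`,
the running average `x̄_T = (1/T) ∑_{t=1}^T x_t` of the primal iterates satisfies
`F(x̄_T) − F(x*) ≤ (1/(2√T))(‖x₁ − x*‖² + K)`, i.e. it is `O(1/√T)`-suboptimal. -/
theorem stmt12
    {n M : ℕ} (T : ℕ) (hT : 1 ≤ T)
    (X : Set (EuclideanSpace ℝ (Fin n))) (hXne : X.Nonempty)
    (hXcomp : IsCompact X) (hXconv : Convex ℝ X)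
    (P : EuclideanSpace ℝ (Fin n) → EuclideanSpace ℝ (Fin n))
    (hP : ∀ y, P y ∈ X ∧ ∀ w ∈ X, ‖y - P y‖ ≤ ‖y - w‖)
    (F : EuclideanSpace ℝ (Fin n) → ℝ)
    (hFconv : ConvexOn ℝ Set.univ F) (hFdiff : Differentiable ℝ F)
    (Hc : Fin M → EuclideanSpace ℝ (Fin n) → ℝ)
    (hHconv : ∀ e, ConvexOn ℝ Set.univ (Hc e))
    (hHdiff : ∀ e, Differentiable ℝ (Hc e))
    (Hvec : EuclideanSpace ℝ (Fin n) → EuclideanSpace ℝ (Fin M))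
    (hHvec : ∀ y e, Hvec y e = Hc e y)
    (ε δ : ℝ) (hε : 0 < ε) (hδ : 0 < δ)
    (x : ℕ → EuclideanSpace ℝ (Fin n)) (lam : ℕ → EuclideanSpace ℝ (Fin M))
    (hx1 : x 1 ∈ X) (hlam1 : lam 1 = 0)
    (gx : ℕ → EuclideanSpace ℝ (Fin n))
    (hgx : ∀ t, gx t =
      gradient (fun y => F y + (∑ e, lam t e * Hc e y) - (δ * ε / 2) * ‖lam t‖ ^ 2) (x t))
    (glam : ℕ → EuclideanSpace ℝ (Fin M))
    (hglam : ∀ t, glam t = Hvec (x t) - (δ * ε) • lam t)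
    (hxrec : ∀ t, 1 ≤ t → t ≤ T → x (t + 1) = P (x t - ε • gx t))
    (hlamrec : ∀ t, 1 ≤ t → t ≤ T → ∀ e,
      lam (t + 1) e = max ((lam t + ε • glam t) e) 0)
    (C₁ C₂ : ℝ) (hC₁ : 0 ≤ C₁) (hC₂ : 0 ≤ C₂)
    (hgxb : ∀ t, 1 ≤ t → t ≤ T → ‖gx t‖ ^ 2 ≤ C₁ * (1 + ‖lam t‖ ^ 2))
    (hglamb : ∀ t, 1 ≤ t → t ≤ T → ‖glam t‖ ^ 2 ≤ C₂ + δ ^ 2 * ε ^ 2 * ‖lam t‖ ^ 2)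
    (K : ℝ) (hK : K = C₁ + C₂) (hδK : C₁ + δ ^ 2 * ε ^ 2 ≤ δ)
    (hεT : ε = 1 / Real.sqrt T)
    (xstar : EuclideanSpace ℝ (Fin n)) (hxstarX : xstar ∈ X)
    (hxstarfeas : ∀ e, Hc e xstar ≤ 0)
    (hxstaropt : ∀ y ∈ X, (∀ e, Hc e y ≤ 0) → F xstar ≤ F y)
    (xbar : EuclideanSpace ℝ (Fin n))
    (hxbar : xbar = (1 / (T : ℝ)) • ∑ t ∈ Finset.Icc 1 T, x t) :
    F xbar - F xstar ≤
      (1 / (2 * Real.sqrt T)) * (‖x 1 - xstar‖ ^ 2 + K) := by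
  have hT0 : (0:ℝ) < (T:ℝ) := by exact_mod_cast Nat.pos_of_ne_zero (by omega)
  set s : ℝ := Real.sqrt T with hs
  have hs0 : 0 < s := Real.sqrt_pos.mpr hT0
  have hs2 : s ^ 2 = (T:ℝ) := Real.sq_sqrt hT0.le
  -- nonnegativity of multipliers
  have hlamnn : ∀ t, 1 ≤ t → t ≤ T + 1 → ∀ e, 0 ≤ lam t e := by
    intro t
    induction t with
    | zero => intro h; omega
    | succ t ih =>
      intro h1 h2 e
      rcases Nat.eq_zero_or_pos t with h0 | h0
      · subst h0
        rw [hlam1]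
        rfl
      · rw [hlamrec t h0 (by omega) e]
        exact le_max_right _ _
  set A : ℕ → ℝ := fun t => ‖x t - xstar‖ ^ 2 + ‖lam t‖ ^ 2 with hA
  -- per-step inequality
  have key : ∀ t, 1 ≤ t → t ≤ T →
      2 * ε * (F (x t) - F xstar) ≤ (A t - A (t + 1)) + ε ^ 2 * K := by
    intro t h1 h2
    have hnn : ∀ e, 0 ≤ lam t e := fun e => hlamnn t h1 (by omega) e
    set ft : EuclideanSpace ℝ (Fin n) → ℝ :=
      fun y => F y + (∑ e, lam t e * Hc e y) - (δ * ε / 2) * ‖lam t‖ ^ 2 with hft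
    have hSdiff : Differentiable ℝ (fun y => ∑ e, lam t e * Hc e y) :=
      Differentiable.fun_sum fun e _ => (hHdiff e).const_mul _
    have hftdiff : Differentiable ℝ ft :=
      (hFdiff.add hSdiff).sub (differentiable_const _)
    have hSconv : ∀ S : Finset (Fin M),
        ConvexOn ℝ Set.univ (fun y => ∑ e ∈ S, lam t e * Hc e y) := by
      intro S
      induction S using Finset.induction_on with
      | empty => simpa using convexOn_const (0:ℝ) convex_univ
      | insert _ _ hnot ih =>
        simp only [Finset.sum_insert hnot]
        exact (ConvexOn.smul (hnn _) (hHconv _)).add ih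
    have hftconv : ConvexOn ℝ Set.univ ft :=
      (hFconv.add (hSconv Finset.univ)).sub (concaveOn_const _ convex_univ)
    have hgxt : gx t = gradient ft (x t) := hgx t
    have hgrad : ft (x t) + ⟪gx t, xstar - x t⟫_ℝ ≤ ft xstar := by
      rw [hgxt]; exact grad_ineq hftconv hftdiff (x t) xstar
    have hip : ⟪gx t, xstar - x t⟫_ℝ = - ⟪x t - xstar, gx t⟫_ℝ := by
      rw [real_inner_comm, show xstar - x t = -(x t - xstar) by abel, inner_neg_left]
    -- primal step
    have hproj : ‖x (t + 1) - xstar‖ ≤ ‖(x t - ε • gx t) - xstar‖ := by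
      rw [hxrec t h1 h2]
      exact proj_contract hXconv _ _ (hP _).1 (hP _).2 xstar hxstarX
    have ha2 : ‖x (t + 1) - xstar‖ ^ 2 ≤ ‖(x t - ε • gx t) - xstar‖ ^ 2 :=
      pow_le_pow_left₀ (norm_nonneg _) hproj 2
    have hexp1 : ‖(x t - ε • gx t) - xstar‖ ^ 2
        = ‖x t - xstar‖ ^ 2 - 2 * ε * ⟪x t - xstar, gx t⟫_ℝ + ε ^ 2 * ‖gx t‖ ^ 2 := by
      rw [show (x t - ε • gx t) - xstar = (x t - xstar) - ε • gx t by abel,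
        norm_sub_sq_real, real_inner_smul_right, norm_smul, mul_pow,
        Real.norm_eq_abs, sq_abs]
      ring
    -- dual step
    have hb2 : ‖lam (t + 1)‖ ^ 2 ≤ ‖lam t + ε • glam t‖ ^ 2 := by
      rw [eunorm_sq, eunorm_sq]
      refine Finset.sum_le_sum fun e _ => ?_
      rw [hlamrec t h1 h2 e]
      exact max_sq_le _
    have hexp2 : ‖lam t + ε • glam t‖ ^ 2
        = ‖lam t‖ ^ 2 + 2 * ε * ⟪lam t, glam t⟫_ℝ + ε ^ 2 * ‖glam t‖ ^ 2 := by
      rw [norm_add_sq_real, real_inner_smul_right, norm_smul, mul_pow,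
        Real.norm_eq_abs, sq_abs]
      ring
    have hD : ⟪lam t, glam t⟫_ℝ
        = (∑ e, lam t e * Hc e (x t)) - δ * ε * ‖lam t‖ ^ 2 := by
      rw [hglam t, inner_sub_right, real_inner_smul_right,
        real_inner_self_eq_norm_sq, eu_inner_eq]
      have : (∑ e, lam t e * Hvec (x t) e) = ∑ e, lam t e * Hc e (x t) :=
        Finset.sum_congr rfl fun e _ => by rw [hHvec]
      rw [this]
    have hfeas : (∑ e, lam t e * Hc e xstar) ≤ 0 :=
      Finset.sum_nonpos fun e _ => mul_nonpos_iff.mpr (Or.inl ⟨hnn e, hxstarfeas e⟩)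
    have hftx : ft (x t)
        = F (x t) + (∑ e, lam t e * Hc e (x t)) - (δ * ε / 2) * ‖lam t‖ ^ 2 := by
      simp only [hft]
    have hfts : ft xstar
        = F xstar + (∑ e, lam t e * Hc e xstar) - (δ * ε / 2) * ‖lam t‖ ^ 2 := by
      simp only [hft]
    -- bounds
    have hbnn : (0:ℝ) ≤ ‖lam t‖ ^ 2 := sq_nonneg _
    have hgh : ‖gx t‖ ^ 2 + ‖glam t‖ ^ 2 ≤ K + δ * ‖lam t‖ ^ 2 := by
      have h3 := hgxb t h1 h2
      have h4 := hglamb t h1 h2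
      linarith [mul_le_mul_of_nonneg_right hδK hbnn]
    -- pre-multiplied facts for linarith
    have q1 : 2 * ε * ft (x t) = 2 * ε * F (x t)
        + 2 * ε * (∑ e, lam t e * Hc e (x t)) - δ * ε ^ 2 * ‖lam t‖ ^ 2 := by
      rw [hftx]; ring
    have q2 : 2 * ε * ft xstar = 2 * ε * F xstar
        + 2 * ε * (∑ e, lam t e * Hc e xstar) - δ * ε ^ 2 * ‖lam t‖ ^ 2 := by
      rw [hfts]; ring
    have q3 : 2 * ε * (∑ e, lam t e * Hc e xstar) ≤ 0 :=
      mul_nonpos_iff.mpr (Or.inl ⟨by positivity, hfeas⟩)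
    have q4 : 2 * ε * ⟪lam t, glam t⟫_ℝ
        = 2 * ε * (∑ e, lam t e * Hc e (x t)) - 2 * δ * ε ^ 2 * ‖lam t‖ ^ 2 := by
      rw [hD]; ring
    have q5 : ε ^ 2 * ‖gx t‖ ^ 2 + ε ^ 2 * ‖glam t‖ ^ 2
        ≤ ε ^ 2 * K + δ * ε ^ 2 * ‖lam t‖ ^ 2 := by
      have h7 := mul_le_mul_of_nonneg_left hgh (sq_nonneg ε)
      linarith
    have q6 : (0:ℝ) ≤ δ * ε ^ 2 * ‖lam t‖ ^ 2 := by positivity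
    have q7 : 2 * ε * ft (x t) - 2 * ε * ft xstar
        ≤ 2 * ε * ⟪x t - xstar, gx t⟫_ℝ := by
      have h5 : ft (x t) - ft xstar ≤ ⟪x t - xstar, gx t⟫_ℝ := by
        rw [hip] at hgrad; linarith
      have h8 := mul_le_mul_of_nonneg_left h5 (by linarith : (0:ℝ) ≤ 2 * ε)
      linarith
    have hA1 : A t = ‖x t - xstar‖ ^ 2 + ‖lam t‖ ^ 2 := rfl
    have hA2 : A (t + 1) = ‖x (t + 1) - xstar‖ ^ 2 + ‖lam (t + 1)‖ ^ 2 := rfl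
    rw [hexp1] at ha2
    rw [hexp2] at hb2
    rw [hA1, hA2]
    linarith [ha2, hb2, q1, q2, q3, q4, q5, q6, q7]
  -- sum over t
  have hcard : (Finset.Icc 1 T).card = T := by rw [Nat.card_Icc]; omega
  have hsum : ∑ t ∈ Finset.Icc 1 T, (2 * ε * (F (x t) - F xstar))
      ≤ (A 1 - A (T + 1)) + (T:ℝ) * (ε ^ 2 * K) := by
    calc ∑ t ∈ Finset.Icc 1 T, (2 * ε * (F (x t) - F xstar))
        ≤ ∑ t ∈ Finset.Icc 1 T, ((A t - A (t + 1)) + ε ^ 2 * K) := by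
          refine Finset.sum_le_sum fun t ht => ?_
          rw [Finset.mem_Icc] at ht
          exact key t ht.1 ht.2
      _ = (A 1 - A (T + 1)) + (T:ℝ) * (ε ^ 2 * K) := by
          rw [Finset.sum_add_distrib, telescope_Icc, Finset.sum_const, hcard,
            nsmul_eq_mul]
  have hA1v : A 1 = ‖x 1 - xstar‖ ^ 2 := by
    simp [hA, hlam1]
  have hATnn : 0 ≤ A (T + 1) := by positivity
  -- Jensen
  have hjen : (T:ℝ) * F xbar ≤ ∑ t ∈ Finset.Icc 1 T, F (x t) := by
    have hj := hFconv.map_sum_le (t := Finset.Icc 1 T) (w := fun _ => 1 / (T:ℝ))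
      (p := x) (fun i _ => by positivity)
      (by rw [Finset.sum_const, hcard, nsmul_eq_mul]; field_simp)
      (fun i _ => Set.mem_univ _)
    rw [hxbar, Finset.smul_sum]
    have hj2 : F (∑ i ∈ Finset.Icc 1 T, (1 / (T:ℝ)) • x i)
        ≤ (1 / (T:ℝ)) * ∑ i ∈ Finset.Icc 1 T, F (x i) := by
      rw [Finset.mul_sum]
      simpa [smul_eq_mul] using hj
    have h6 := mul_le_mul_of_nonneg_left hj2 hT0.le
    calc (T:ℝ) * F (∑ i ∈ Finset.Icc 1 T, (1 / (T:ℝ)) • x i)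
        ≤ (T:ℝ) * ((1 / (T:ℝ)) * ∑ i ∈ Finset.Icc 1 T, F (x i)) := h6
      _ = ∑ i ∈ Finset.Icc 1 T, F (x i) := by field_simp
  -- expand sum of LHS
  have hexp : ∑ t ∈ Finset.Icc 1 T, (2 * ε * (F (x t) - F xstar))
      = 2 * ε * (∑ t ∈ Finset.Icc 1 T, F (x t)) - (T:ℝ) * (2 * ε * F xstar) := by
    rw [← Finset.mul_sum, Finset.sum_sub_distrib, Finset.sum_const, hcard,
      nsmul_eq_mul]
    ring
  have hmain : 2 * ε * (T:ℝ) * (F xbar - F xstar)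
      ≤ ‖x 1 - xstar‖ ^ 2 + (T:ℝ) * (ε ^ 2 * K) := by
    have h9 := mul_le_mul_of_nonneg_left hjen (by linarith : (0:ℝ) ≤ 2 * ε)
    rw [hexp, hA1v] at hsum
    linarith [hATnn, h9, hsum]
  have e1 : 2 * ε * (T:ℝ) = 2 * s := by
    rw [hεT, ← hs2]
    field_simp
  have e2 : (T:ℝ) * (ε ^ 2 * K) = K := by
    rw [hεT, ← hs2]
    field_simp
  have h10 : 2 * s * (F xbar - F xstar) ≤ ‖x 1 - xstar‖ ^ 2 + K := by
    calc 2 * s * (F xbar - F xstar) = 2 * ε * (T:ℝ) * (F xbar - F xstar) := by rw [e1]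
      _ ≤ ‖x 1 - xstar‖ ^ 2 + (T:ℝ) * (ε ^ 2 * K) := hmain
      _ = ‖x 1 - xstar‖ ^ 2 + K := by rw [e2]
  have hrw : (1 / (2 * s)) * (‖x 1 - xstar‖ ^ 2 + K)
      = (‖x 1 - xstar‖ ^ 2 + K) / (2 * s) := by ring
  rw [hrw, le_div_iff₀ (by positivity)]
  linarith [h10]
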